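/- arXiv:1608.04818 — 5 statements merged into one kernel-verified Lean document; each statement's English description precedes it below -/
import Mathlib

section
/- For p, q ∈ δ_N, the vector s^inf defined recursively by s^inf_i = min{Σ_{l≤i} p_l, Σ_{l≤i} q_l} − Σ_{l<i} s^inf_l (with s^inf_0 = 0) belongs to δ_N and is the infimum of p and q under majorization: s^inf ≺ p, s^inf ≺ q, and every s ∈ δ_N with s ≺ p and s ≺ q satisfies s ≺ s^inf. -/
open Finset

/-- Partial sum of the first `l` components of `p`. -/
def PartSum {N : ℕ} (p : Fin N → ℝ) (l : ℕ) : ℝ := ∑ i : Fin N, if (i : ℕ) < l then p i else 0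

/-- `p` is a probability vector sorted in decreasing order (an element of δ_N). -/
def IsDecProb {N : ℕ} (p : Fin N → ℝ) : Prop :=
  (∀ i, 0 ≤ p i) ∧ (∀ i j : Fin N, i ≤ j → p j ≤ p i) ∧ ∑ i, p i = 1

/-- `p ≺ q` : every partial sum of `p` is at most the corresponding partial sum of `q`. -/
def Maj {N : ℕ} (p q : Fin N → ℝ) : Prop := ∀ l : ℕ, PartSum p l ≤ PartSum q l

/-- `s` is the supremum of `p` and `q` in the majorization lattice. -/
def IsSup {N : ℕ} (s p q : Fin N → ℝ) : Prop :=
  IsDecProb s ∧ Maj p s ∧ Maj q s ∧ ∀ t, IsDecProb t → Maj p t → Maj q t → Maj s t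

/-- `s` is the infimum of `p` and `q` in the majorization lattice. -/
def IsInf {N : ℕ} (s p q : Fin N → ℝ) : Prop :=
  IsDecProb s ∧ Maj s p ∧ Maj s q ∧ ∀ t, IsDecProb t → Maj t p → Maj t q → Maj t s

/-- Shannon entropy. -/
noncomputable def H {N : ℕ} (p : Fin N → ℝ) : ℝ := -∑ i, p i * Real.log (p i)

/-- The candidate infimum: its partial sums are the minima of the partial sums of p and q. -/
noncomputable def sInfVec {N : ℕ} (p q : Fin N → ℝ) (i : Fin N) : ℝ :=
  min (PartSum p ((i : ℕ) + 1)) (PartSum q ((i : ℕ) + 1)) - min (PartSum p (i : ℕ)) (PartSum q (i : ℕ))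

section Aux
variable {N : ℕ}

lemma partSum_zero (p : Fin N → ℝ) : PartSum p 0 = 0 := by simp [PartSum]

lemma partSum_succ (p : Fin N → ℝ) (l : ℕ) :
    PartSum p (l + 1) = PartSum p l + (if h : l < N then p ⟨l, h⟩ else 0) := by
  unfold PartSum
  have key : ∀ i : Fin N, (if (i : ℕ) < l + 1 then p i else 0)
      = (if (i : ℕ) < l then p i else 0) + (if (i : ℕ) = l then p i else 0) := by
    intro i
    rcases lt_trichotomy (i : ℕ) l with h | h | h
    · simp [h, Nat.lt_succ_of_lt h, Nat.ne_of_lt h]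
    · simp [h]
    · simp [Nat.not_lt.mpr h, Nat.not_lt.mpr (Nat.le_of_lt h), Nat.ne_of_gt h]
  rw [Finset.sum_congr rfl (fun i _ => key i), Finset.sum_add_distrib]
  congr 1
  by_cases h : l < N
  · have : ∀ i : Fin N, ((i : ℕ) = l) = (i = ⟨l, h⟩) := by
      intro i; simp [Fin.ext_iff]
    simp only [this]
    rw [Finset.sum_ite_eq' univ (⟨l, h⟩ : Fin N) p]
    simp [h]
  · have : ∀ i : Fin N, (i : ℕ) ≠ l := fun i hi => h (hi ▸ i.isLt)
    simp [this, h]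

lemma partSum_mono (p : Fin N → ℝ) (hp0 : ∀ i, 0 ≤ p i) : Monotone (PartSum p) := by
  apply monotone_nat_of_le_succ
  intro l
  rw [partSum_succ]
  have : (0:ℝ) ≤ if h : l < N then p ⟨l, h⟩ else 0 := by
    split
    · exact hp0 _
    · exact le_rfl
  linarith

lemma partSum_of_ge (p : Fin N → ℝ) {l : ℕ} (h : N ≤ l) : PartSum p l = ∑ i, p i := by
  unfold PartSum
  exact Finset.sum_congr rfl fun i _ => if_pos (lt_of_lt_of_le i.isLt h)

lemma inc_anti {p : Fin N → ℝ} (hp : IsDecProb p) (l : ℕ) :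
    (if h : l + 1 < N then p ⟨l + 1, h⟩ else 0) ≤ (if h : l < N then p ⟨l, h⟩ else 0) := by
  split_ifs with h1 h2 h2
  · exact hp.2.1 _ _ (by simp [Fin.le_def])
  · exact absurd (Nat.lt_of_succ_lt h1) h2
  · exact hp.1 _
  · exact le_rfl

lemma partSum_concave {p : Fin N → ℝ} (hp : IsDecProb p) (l : ℕ) :
    PartSum p l + PartSum p (l + 2) ≤ 2 * PartSum p (l + 1) := by
  have h2 : PartSum p (l + 2) = PartSum p (l + 1) + (if h : l + 1 < N then p ⟨l + 1, h⟩ else 0) :=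
    partSum_succ p (l + 1)
  have h1 : PartSum p (l + 1) = PartSum p l + (if h : l < N then p ⟨l, h⟩ else 0) :=
    partSum_succ p l
  have := inc_anti hp l
  linarith

lemma minF_concave {p q : Fin N → ℝ} (hp : IsDecProb p) (hq : IsDecProb q) (l : ℕ) :
    min (PartSum p l) (PartSum q l) + min (PartSum p (l + 2)) (PartSum q (l + 2))
      ≤ 2 * min (PartSum p (l + 1)) (PartSum q (l + 1)) := by
  have hpc := partSum_concave hp l
  have hqc := partSum_concave hq l
  have h1 : min (PartSum p l) (PartSum q l) + min (PartSum p (l + 2)) (PartSum q (l + 2))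
      ≤ 2 * PartSum p (l + 1) := by
    have := min_le_left (PartSum p l) (PartSum q l)
    have := min_le_left (PartSum p (l + 2)) (PartSum q (l + 2))
    linarith
  have h2 : min (PartSum p l) (PartSum q l) + min (PartSum p (l + 2)) (PartSum q (l + 2))
      ≤ 2 * PartSum q (l + 1) := by
    have := min_le_right (PartSum p l) (PartSum q l)
    have := min_le_right (PartSum p (l + 2)) (PartSum q (l + 2))
    linarith
  rcases le_total (PartSum p (l + 1)) (PartSum q (l + 1)) with h | h
  · rw [min_eq_left h]; exact h1
  · rw [min_eq_right h]; exact h2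

/-- The partial sums of `sInfVec p q` are exactly the minima of the partial sums. -/
lemma partSum_sInfVec (p q : Fin N → ℝ) (l : ℕ) :
    PartSum (sInfVec p q) l = min (PartSum p l) (PartSum q l) := by
  induction l with
  | zero => simp [partSum_zero]
  | succ l ih =>
    rw [partSum_succ, ih]
    by_cases h : l < N
    · rw [dif_pos h]
      show _ = min (PartSum p (l + 1)) (PartSum q (l + 1))
      simp [sInfVec]
    · rw [dif_neg h]
      have hN : N ≤ l := Nat.not_lt.mp h
      rw [partSum_of_ge p hN, partSum_of_ge q hN, partSum_of_ge p (le_trans hN (Nat.le_succ l)),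
        partSum_of_ge q (le_trans hN (Nat.le_succ l))]
      ring

/-- The recursively defined vector s^inf belongs to δ_N and is the infimum of p and q
under majorization. -/
theorem sInfVec_isInf {N : ℕ} (p q : Fin N → ℝ) (hp : IsDecProb p) (hq : IsDecProb q) :
    IsDecProb (sInfVec p q) ∧ IsInf (sInfVec p q) p q := by
  set F : ℕ → ℝ := fun l => min (PartSum p l) (PartSum q l) with hF
  have hFmono : Monotone F := fun a b hab =>
    le_min (le_trans (min_le_left _ _) (partSum_mono p hp.1 hab))
      (le_trans (min_le_right _ _) (partSum_mono q hq.1 hab))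
  have hval : ∀ i : Fin N, sInfVec p q i = F ((i : ℕ) + 1) - F (i : ℕ) := fun i => rfl
  have hnonneg : ∀ i, 0 ≤ sInfVec p q i := by
    intro i
    rw [hval]
    have := hFmono (Nat.le_succ (i : ℕ))
    linarith
  have hanti : Antitone (fun k : ℕ => F (k + 1) - F k) := by
    apply antitone_nat_of_succ_le
    intro k
    have := minF_concave hp hq k
    simp only [hF]
    linarith [minF_concave hp hq k]
  have hdec : ∀ i j : Fin N, i ≤ j → sInfVec p q j ≤ sInfVec p q i := by
    intro i j hij
    rw [hval, hval]
    exact hanti (by exact_mod_cast hij)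
  have hsum : ∑ i, sInfVec p q i = 1 := by
    have h1 : PartSum (sInfVec p q) N = ∑ i, sInfVec p q i := partSum_of_ge _ le_rfl
    rw [← h1, partSum_sInfVec, partSum_of_ge p le_rfl, partSum_of_ge q le_rfl,
      hp.2.2, hq.2.2]
    simp
  have hDecProb : IsDecProb (sInfVec p q) := ⟨hnonneg, hdec, hsum⟩
  refine ⟨hDecProb, hDecProb, ?_, ?_, ?_⟩
  · intro l; rw [partSum_sInfVec]; exact min_le_left _ _
  · intro l; rw [partSum_sInfVec]; exact min_le_right _ _
  · intro t ht htp htq l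
    rw [partSum_sInfVec]
    exact le_min (htp l) (htq l)
end Aux
end

section
/- The vector s defined by s_1 = max{p_1, q_1} and s_i = max{Σ_{l≤i} p_l, Σ_{l≤i} q_l} − Σ_{l<i} s_l need not be sorted in decreasing order; i.e., there exist p, q ∈ δ_N for which s ∉ δ_N. -/
open Finset

/-- The upper-envelope vector: its partial sums are the maxima of the partial sums of p and q. -/
noncomputable def sMaxVec {N : ℕ} (p q : Fin N → ℝ) (i : Fin N) : ℝ :=
  max (PartSum p ((i : ℕ) + 1)) (PartSum q ((i : ℕ) + 1)) - max (PartSum p (i : ℕ)) (PartSum q (i : ℕ))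

/-- The upper-envelope construction need not give a decreasingly sorted probability vector:
there exist p, q ∈ δ_N with s ∉ δ_N. -/
theorem sMaxVec_not_always_in_delta :
    ∃ (N : ℕ) (p q : Fin N → ℝ), IsDecProb p ∧ IsDecProb q ∧ ¬ IsDecProb (sMaxVec p q) := by
  refine ⟨4, ![2/5, 1/5, 1/5, 1/5], ![3/10, 3/10, 3/10, 1/10], ?_, ?_, ?_⟩
  · refine ⟨?_, ?_, ?_⟩
    · intro i; fin_cases i <;> norm_num
    · intro i j _; fin_cases i <;> fin_cases j <;> simp_all <;> norm_num
    · simp [Fin.sum_univ_four]; norm_num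
  · refine ⟨?_, ?_, ?_⟩
    · intro i; fin_cases i <;> norm_num
    · intro i j _; fin_cases i <;> fin_cases j <;> simp_all <;> norm_num
    · simp [Fin.sum_univ_four]; norm_num
  · rintro ⟨-, hmono, -⟩
    have h := hmono ⟨1, by norm_num⟩ ⟨2, by norm_num⟩ (by simp [Fin.le_def])
    simp only [sMaxVec, PartSum, Fin.sum_univ_four] at h
    simp only [show ((3:Fin 4):ℕ) = 3 from rfl] at h
    norm_num at h
    simp [Matrix.cons_val] at h
    norm_num at h
end

section
/- If s is a vector whose partial sums are S_i(s) = max{S_i(p), S_i(q)} for p, q ∈ δ_N, and j is the smallest index with s_j > s_{j−1}, and k ≤ j−1 is the greatest index with s_{k−1} ≥ a where a = (Σ_{l=k}^{j} s_l)/(j−k+1), then the 'flattening' transformation that replaces s_k,...,s_j each by a and leaves other components unchanged preserves the property of majorizing both p and q. -/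
open Finset

/-- Partial sum S_l(p) = Σ_{i=1}^l p_i (1-based indexing). -/
def PS (p : ℕ → ℝ) (l : ℕ) : ℝ := ∑ i ∈ Finset.Icc 1 l, p i

/-- One flattening step of the Cicalese–Vaccaro algorithm preserves the property of
majorizing both p and q. -/
theorem flattening_preserves_majorizing (N : ℕ) (p q s : ℕ → ℝ)
    (hs : ∀ l, l ≤ N → PS s l = max (PS p l) (PS q l))
    (j k : ℕ) (a : ℝ) (t : ℕ → ℝ)
    -- j is the smallest index in [2,N] with s_j > s_{j-1}
    (hj : 2 ≤ j ∧ j ≤ N ∧ s (j - 1) < s j)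
    (hjmin : ∀ i, 2 ≤ i → i ≤ N → s (i - 1) < s i → j ≤ i)
    -- a is the average of s_k, ..., s_j
    (ha : a = (∑ i ∈ Finset.Icc k j, s i) / ((j - k + 1 : ℕ) : ℝ))
    -- k is the greatest index in [1, j-1] with s_{k-1} ≥ a (convention s_0 > 1)
    (hk : 1 ≤ k ∧ k ≤ j - 1 ∧ (k = 1 ∨ a ≤ s (k - 1)))
    (hkmax : ∀ k', 1 ≤ k' → k' ≤ j - 1 →
      (k' = 1 ∨ (∑ i ∈ Finset.Icc k' j, s i) / ((j - k' + 1 : ℕ) : ℝ) ≤ s (k' - 1)) →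
      k' ≤ k)
    -- t replaces s_k, ..., s_j each by a and leaves other components unchanged
    (ht : ∀ i, t i = if k ≤ i ∧ i ≤ j then a else s i) :
    (∀ l, l ≤ N → PS p l ≤ PS t l) ∧ (∀ l, l ≤ N → PS q l ≤ PS t l) := by
  obtain ⟨hj2, hjN, hjs⟩ := hj
  obtain ⟨hk1, hkj, -⟩ := hk
  have hkj' : k + 1 ≤ j := by omega
  -- key fact: the suffix average beats s m for k ≤ m < j
  have key : ∀ m, k ≤ m → m + 1 ≤ j →
      ((j - (m+1) + 1 : ℕ) : ℝ) * s m < ∑ i ∈ Finset.Icc (m+1) j, s i := by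
    intro m hm hmj
    rcases eq_or_lt_of_le hmj with h | h
    · have hIcc : Finset.Icc (m+1) j = {j} := by rw [h, Finset.Icc_self]
      rw [hIcc, Finset.sum_singleton, show j - (m+1) + 1 = 1 by omega]
      simpa [show m = j - 1 by omega] using hjs
    · have hne : ¬ (m + 1 ≤ k) := by omega
      have hno : ¬ (m+1 = 1 ∨
          (∑ i ∈ Finset.Icc (m+1) j, s i) / ((j - (m+1) + 1 : ℕ) : ℝ) ≤ s (m+1-1)) :=
        fun hcon => hne (hkmax (m+1) (by omega) (by omega) hcon)
      push_neg at hno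
      obtain ⟨-, hlt⟩ := hno
      have hpos : (0:ℝ) < ((j - (m+1) + 1 : ℕ) : ℝ) := by
        have : 0 < j - (m+1) + 1 := by omega
        exact_mod_cast this
      have h2 := (lt_div_iff₀ hpos).mp hlt
      simpa [mul_comm] using h2
  have hne0 : ((j - k + 1 : ℕ) : ℝ) ≠ 0 := by
    have : 0 < j - k + 1 := by omega
    exact ne_of_gt (by exact_mod_cast this)
  -- suffix averages dominate a
  have havg : ∀ m, k ≤ m → m ≤ j →
      ((j - m + 1 : ℕ) : ℝ) * a ≤ ∑ i ∈ Finset.Icc m j, s i := by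
    intro m hm
    induction m, hm using Nat.le_induction with
    | base =>
      intro _
      rw [ha, mul_comm, div_mul_cancel₀ _ hne0]
    | succ m hm IH =>
      intro hmj
      have hIH := IH (by omega)
      have hkey := key m hm hmj
      have h1 : Finset.Icc m j = Finset.Ioc (m-1) j := by
        rw [← Finset.Icc_add_one_left_eq_Ioc]; congr 1; omega
      have h2 : Finset.Icc (m+1) j = Finset.Ioc m j := Finset.Icc_add_one_left_eq_Ioc m j
      have h3 : Finset.Ioc (m-1) m = {m} := by
        ext x
        simp only [Finset.mem_Ioc, Finset.mem_singleton]
        omega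
      have hsplit : s m + ∑ i ∈ Finset.Icc (m+1) j, s i = ∑ i ∈ Finset.Icc m j, s i := by
        rw [h1, h2, ← Finset.sum_Ioc_consecutive _ (by omega : m - 1 ≤ m) (by omega : m ≤ j),
          h3, Finset.sum_singleton]
      have hc : (j - m + 1 : ℕ) = (j - (m+1) + 1) + 1 := by omega
      rw [hc, Nat.cast_add, Nat.cast_one] at hIH
      have hn1 : (1:ℝ) ≤ ((j - (m+1) + 1 : ℕ) : ℝ) := by
        have : 1 ≤ j - (m+1) + 1 := by omega
        exact_mod_cast this
      nlinarith [mul_le_mul_of_nonneg_left hIH (by linarith : (0:ℝ) ≤ ((j - (m+1) + 1 : ℕ) : ℝ)),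
        hkey, hsplit, hn1]
  have hBk : ∑ i ∈ Finset.Icc k j, s i = ((j - k + 1 : ℕ) : ℝ) * a := by
    rw [ha, mul_comm, div_mul_cancel₀ _ hne0]
  have hIk : ∀ x, Finset.Icc k x = Finset.Ioc (k-1) x := by
    intro x; rw [← Finset.Icc_add_one_left_eq_Ioc]; congr 1; omega
  -- prefix sums of the block are dominated by multiples of a
  have hsum_le : ∀ l, k ≤ l → l ≤ j →
      ∑ i ∈ Finset.Icc k l, s i ≤ ((l - k + 1 : ℕ) : ℝ) * a := by
    intro l hkl hlj
    have hsplit : ∑ i ∈ Finset.Icc k l, s i + ∑ i ∈ Finset.Ioc l j, s i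
        = ∑ i ∈ Finset.Icc k j, s i := by
      rw [hIk, hIk]; exact Finset.sum_Ioc_consecutive _ (by omega) hlj
    have hB1 : ((j - l : ℕ) : ℝ) * a ≤ ∑ i ∈ Finset.Ioc l j, s i := by
      rcases eq_or_lt_of_le hlj with h | h
      · subst h; simp
      · have h4 := havg (l+1) (by omega) (by omega)
        rw [Finset.Icc_add_one_left_eq_Ioc] at h4
        rw [show (j - l) = (j - (l+1) + 1) by omega]
        exact h4
    rw [hBk] at hsplit
    have hc : ((j - k + 1 : ℕ) : ℝ) = ((l - k + 1 : ℕ) : ℝ) + ((j - l : ℕ) : ℝ) := by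
      have h5 : (j - k + 1 : ℕ) = (l - k + 1) + (j - l) := by omega
      exact_mod_cast congrArg (fun n : ℕ => (n : ℝ)) h5
    rw [hc] at hsplit
    linarith [add_mul ((l - k + 1 : ℕ) : ℝ) ((j - l : ℕ) : ℝ) a]
  have hPS : ∀ (f : ℕ → ℝ) l, PS f l = ∑ i ∈ Finset.Ioc 0 l, f i := by
    intro f l
    unfold PS
    congr 1
  -- main estimate : PS s l ≤ PS t l
  have hts : ∀ l, PS s l ≤ PS t l := by
    intro l
    have hlow : ∑ i ∈ Finset.Ioc 0 (k-1), t i = ∑ i ∈ Finset.Ioc 0 (k-1), s i := by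
      refine Finset.sum_congr rfl fun i hi => ?_
      rw [Finset.mem_Ioc] at hi
      rw [ht i, if_neg (by omega)]
    rcases lt_or_ge l k with h1 | h1
    · have heq : PS t l = PS s l := by
        unfold PS
        refine Finset.sum_congr rfl fun i hi => ?_
        rw [Finset.mem_Icc] at hi
        rw [ht i, if_neg (by omega)]
      rw [heq]
    · rcases le_or_gt l j with h2 | h2
      · -- k ≤ l ≤ j
        have e1 : PS s l = ∑ i ∈ Finset.Ioc 0 (k-1), s i + ∑ i ∈ Finset.Ioc (k-1) l, s i := by
          rw [hPS, ← Finset.sum_Ioc_consecutive _ (by omega : 0 ≤ k-1) (by omega : k-1 ≤ l)]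
        have e2 : PS t l = ∑ i ∈ Finset.Ioc 0 (k-1), t i + ∑ i ∈ Finset.Ioc (k-1) l, t i := by
          rw [hPS, ← Finset.sum_Ioc_consecutive _ (by omega : 0 ≤ k-1) (by omega : k-1 ≤ l)]
        have e4 : ∑ i ∈ Finset.Ioc (k-1) l, t i = ((l - k + 1 : ℕ) : ℝ) * a := by
          have : ∀ i ∈ Finset.Ioc (k-1) l, t i = a := by
            intro i hi
            rw [Finset.mem_Ioc] at hi
            rw [ht i, if_pos (by omega)]
          rw [Finset.sum_congr rfl this, Finset.sum_const, Nat.card_Ioc, nsmul_eq_mul]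
          congr 1
          have : l - (k-1) = l - k + 1 := by omega
          exact_mod_cast congrArg (fun n : ℕ => (n : ℝ)) this
        have e5 := hsum_le l h1 h2
        rw [hIk] at e5
        rw [e1, e2, hlow, e4]
        linarith
      · -- j < l
        have e1 : PS s l = ∑ i ∈ Finset.Ioc 0 (k-1), s i + ∑ i ∈ Finset.Ioc (k-1) j, s i
            + ∑ i ∈ Finset.Ioc j l, s i := by
          rw [hPS, ← Finset.sum_Ioc_consecutive _ (by omega : 0 ≤ j) (le_of_lt h2),
            ← Finset.sum_Ioc_consecutive _ (by omega : 0 ≤ k-1) (by omega : k-1 ≤ j)]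
        have e2 : PS t l = ∑ i ∈ Finset.Ioc 0 (k-1), t i + ∑ i ∈ Finset.Ioc (k-1) j, t i
            + ∑ i ∈ Finset.Ioc j l, t i := by
          rw [hPS, ← Finset.sum_Ioc_consecutive _ (by omega : 0 ≤ j) (le_of_lt h2),
            ← Finset.sum_Ioc_consecutive _ (by omega : 0 ≤ k-1) (by omega : k-1 ≤ j)]
        have e3 : ∑ i ∈ Finset.Ioc j l, t i = ∑ i ∈ Finset.Ioc j l, s i := by
          refine Finset.sum_congr rfl fun i hi => ?_
          rw [Finset.mem_Ioc] at hi
          rw [ht i, if_neg (by omega)]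
        have e4 : ∑ i ∈ Finset.Ioc (k-1) j, t i = ∑ i ∈ Finset.Ioc (k-1) j, s i := by
          have h5 : ∀ i ∈ Finset.Ioc (k-1) j, t i = a := by
            intro i hi
            rw [Finset.mem_Ioc] at hi
            rw [ht i, if_pos (by omega)]
          rw [Finset.sum_congr rfl h5, Finset.sum_const, Nat.card_Ioc, nsmul_eq_mul,
            ← hIk, hBk]
          congr 1
          have : j - (k-1) = j - k + 1 := by omega
          exact_mod_cast congrArg (fun n : ℕ => (n : ℝ)) this
        rw [e1, e2, hlow, e3, e4]
  constructor
  · intro l hl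
    calc PS p l ≤ max (PS p l) (PS q l) := le_max_left _ _
      _ = PS s l := (hs l hl).symm
      _ ≤ PS t l := hts l
  · intro l hl
    calc PS q l ≤ max (PS p l) (PS q l) := le_max_right _ _
      _ = PS s l := (hs l hl).symm
      _ ≤ PS t l := hts l
end

section
/- The function d(p,q) = H(p) + H(q) − 2H(p ∨ q) is nonnegative on δ_N × δ_N, and d(p,q) = 0 if and only if p = q. -/
open Finset

namespace DistAux

variable {N : ℕ}

/-- Extension of a vector on `Fin N` to `ℕ` by zero. -/
noncomputable def ext (p : Fin N → ℝ) : ℕ → ℝ := fun i => if h : i < N then p ⟨i, h⟩ else 0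

lemma ext_coe (p : Fin N → ℝ) (i : Fin N) : ext p (i : ℕ) = p i := by
  simp [ext, i.isLt]

lemma partSum_eq (p : Fin N → ℝ) (l : ℕ) :
    PartSum p l = ∑ i ∈ Finset.range l, ext p i := by
  induction l with
  | zero => simp [PartSum]
  | succ l ih =>
    rw [Finset.sum_range_succ, ← ih]
    unfold PartSum
    have hpt : ∀ i : Fin N,
        (if (i : ℕ) < l + 1 then p i else 0)
          = (if (i : ℕ) < l then p i else 0) + (if (i : ℕ) = l then p i else 0) := by
      intro i
      rcases lt_trichotomy (i : ℕ) l with h | h | h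
      · simp [h, Nat.lt_succ_of_lt h, Nat.ne_of_lt h]
      · simp [h]
      · have h1 : ¬ ((i : ℕ) < l + 1) := by omega
        have h2 : ¬ ((i : ℕ) < l) := by omega
        have h3 : (i : ℕ) ≠ l := by omega
        simp [h1, h2, h3]
    rw [Finset.sum_congr rfl (fun i _ => hpt i), Finset.sum_add_distrib]
    congr 1
    by_cases hl : l < N
    · have : ∀ i : Fin N, (if (i : ℕ) = l then p i else 0)
          = (if i = (⟨l, hl⟩ : Fin N) then p i else 0) := by
        intro i
        congr 1
        simp [Fin.ext_iff]
      rw [Finset.sum_congr rfl (fun i _ => this i), Finset.sum_ite_eq' Finset.univ]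
      simp [ext, hl]
    · have : ∀ i : Fin N, (if (i : ℕ) = l then p i else 0) = 0 := by
        intro i
        have : (i : ℕ) ≠ l := by have := i.isLt; omega
        simp [this]
      rw [Finset.sum_congr rfl (fun i _ => this i)]
      simp [ext, hl]

lemma sum_ext (p : Fin N → ℝ) (F : ℝ → ℝ) :
    ∑ i : Fin N, F (p i) = ∑ i ∈ Finset.range N, F (ext p i) := by
  rw [← Fin.sum_univ_eq_sum_range (fun i => F (ext p i)) N]
  exact Finset.sum_congr rfl (fun i _ => by rw [ext_coe])

lemma maj_refl (p : Fin N → ℝ) : Maj p p := fun _ => le_rfl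

lemma maj_antisymm {p q : Fin N → ℝ} (h1 : Maj p q) (h2 : Maj q p) : p = q := by
  have he : ∀ l, PartSum p l = PartSum q l := fun l => le_antisymm (h1 l) (h2 l)
  funext i
  have h3 := he ((i : ℕ) + 1)
  have h4 := he (i : ℕ)
  rw [partSum_eq, partSum_eq, Finset.sum_range_succ, Finset.sum_range_succ] at h3
  rw [partSum_eq, partSum_eq] at h4
  have : ext p (i : ℕ) = ext q (i : ℕ) := by linarith
  rwa [ext_coe, ext_coe] at this

/-- Strict Schur concavity of Shannon entropy along majorization. -/
theorem schur {p q : Fin N → ℝ} (hp : IsDecProb p) (hq : IsDecProb q) (hm : Maj p q) :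
    H q ≤ H p ∧ (H p = H q → p = q) := by
  set P : ℕ → ℝ := ext p with hPdef
  set Q : ℕ → ℝ := ext q with hQdef
  have hP0 : ∀ i, 0 ≤ P i := by
    intro i; unfold P; unfold ext; split
    · exact hp.1 _
    · exact le_rfl
  have hQ0 : ∀ i, 0 ≤ Q i := by
    intro i; unfold Q; unfold ext; split
    · exact hq.1 _
    · exact le_rfl
  have hPanti : ∀ i j : ℕ, i ≤ j → P j ≤ P i := by
    intro i j hij
    by_cases hj : j < N
    · have hi : i < N := lt_of_le_of_lt hij hj
      have : ext p j = p ⟨j, hj⟩ := by simp [ext, hj]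
      have h2 : ext p i = p ⟨i, hi⟩ := by simp [ext, hi]
      unfold P
      rw [this, h2]
      exact hp.2.1 ⟨i, hi⟩ ⟨j, hj⟩ hij
    · have : ext p j = 0 := by simp [ext, hj]
      unfold P
      rw [this]
      exact hP0 i
  have hPsum : ∑ i ∈ Finset.range N, P i = 1 := by
    have := sum_ext p id
    simp only [id] at this
    rw [← this]; exact hp.2.2
  have hQsum : ∑ i ∈ Finset.range N, Q i = 1 := by
    have := sum_ext q id
    simp only [id] at this
    rw [← this]; exact hq.2.2
  have hT : ∀ l, 0 ≤ ∑ i ∈ Finset.range l, (Q i - P i) := by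
    intro l
    have := hm l
    rw [partSum_eq, partSum_eq] at this
    rw [Finset.sum_sub_distrib]
    linarith
  have hQpart : ∀ l, l ≤ N → ∑ i ∈ Finset.range l, Q i ≤ 1 := by
    intro l hl
    rw [← hQsum]
    exact Finset.sum_le_sum_of_subset_of_nonneg (Finset.range_subset_range.mpr hl)
      (fun j _ _ => hQ0 j)
  have hPstop : ∀ l, l ≤ N → P l = 0 → ∑ i ∈ Finset.range l, P i = 1 := by
    intro l hl h0
    rw [← hPsum]
    apply Finset.sum_subset (Finset.range_subset_range.mpr hl)
    intro j _ hj
    have hlj : l ≤ j := by simpa using hj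
    have := hPanti l j hlj
    have := hP0 j
    linarith
  have hTstop : ∀ l, l ≤ N → P l = 0 → ∑ i ∈ Finset.range l, (Q i - P i) = 0 := by
    intro l hl h0
    have h1 := hPstop l hl h0
    have h2 := hQpart l hl
    have h3 := hT l
    rw [Finset.sum_sub_distrib] at h3 ⊢
    linarith
  have hzeroQ : ∀ i : ℕ, i < N → P i = 0 → Q i = 0 := by
    intro i hi h0
    have h1 := hPstop i hi.le h0
    have h2 := hT i
    rw [Finset.sum_sub_distrib, h1] at h2
    have h3 := hQpart (i + 1) hi
    rw [Finset.sum_range_succ] at h3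
    have := hQ0 i
    linarith
  -- Abel summation part
  have habel : 0 ≤ ∑ i ∈ Finset.range N, (Q i - P i) * Real.log (P i) := by
    have key := Finset.sum_range_by_parts (fun i => Real.log (P i)) (fun i => Q i - P i) N
    simp only [smul_eq_mul] at key
    have hsum0 : ∑ i ∈ Finset.range N, (Q i - P i) = 0 := by
      rw [Finset.sum_sub_distrib, hQsum, hPsum]; ring
    rw [hsum0, mul_zero, zero_sub] at key
    have hmc : ∑ i ∈ Finset.range N, (Q i - P i) * Real.log (P i)
        = ∑ i ∈ Finset.range N, Real.log (P i) * (Q i - P i) :=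
      Finset.sum_congr rfl (fun i _ => by ring)
    rw [hmc, key, neg_nonneg]
    apply Finset.sum_nonpos
    intro i hi
    have hi' : i + 1 < N := by have := Finset.mem_range.mp hi; omega
    by_cases h0 : P (i + 1) = 0
    · rw [hTstop (i + 1) hi'.le h0, mul_zero]
    · have hpos : 0 < P (i + 1) := lt_of_le_of_ne (hP0 _) (Ne.symm h0)
      have hpos' : 0 < P i := lt_of_lt_of_le hpos (hPanti i (i + 1) (by omega))
      have hlog : Real.log (P (i + 1)) ≤ Real.log (P i) :=
        Real.log_le_log hpos (hPanti i (i + 1) (by omega))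
      exact mul_nonpos_of_nonpos_of_nonneg (by linarith) (hT (i + 1))
  -- pointwise Gibbs inequality
  have hg : ∀ i ∈ Finset.range N,
      0 ≤ Q i * Real.log (Q i) - Q i * Real.log (P i) - Q i + P i ∧
      (Q i * Real.log (Q i) - Q i * Real.log (P i) - Q i + P i = 0 → P i = Q i) := by
    intro i hi
    have hiN := Finset.mem_range.mp hi
    by_cases h0 : P i = 0
    · have hq0 := hzeroQ i hiN h0
      constructor
      · simp [h0, hq0]
      · intro _; rw [h0, hq0]
    · have hPpos : 0 < P i := lt_of_le_of_ne (hP0 _) (Ne.symm h0)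
      by_cases hq0 : Q i = 0
      · constructor
        · simp [hq0]; linarith
        · intro h; simp [hq0] at h; exact absurd h (by linarith)
      · have hQpos : 0 < Q i := lt_of_le_of_ne (hQ0 _) (Ne.symm hq0)
        have hratio : 0 < P i / Q i := div_pos hPpos hQpos
        have hlog1 : Real.log (P i / Q i) ≤ P i / Q i - 1 := Real.log_le_sub_one_of_pos hratio
        have hlogd : Real.log (P i / Q i) = Real.log (P i) - Real.log (Q i) :=
          Real.log_div (ne_of_gt hPpos) (ne_of_gt hQpos)
        have hmul : Q i * Real.log (P i / Q i) ≤ Q i * (P i / Q i - 1) :=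
          mul_le_mul_of_nonneg_left hlog1 (le_of_lt hQpos)
        have hsimp : Q i * (P i / Q i - 1) = P i - Q i := by
          field_simp
        rw [hlogd, hsimp] at hmul
        constructor
        · nlinarith [hmul]
        · intro heq
          by_contra hne
          have hne1 : P i / Q i ≠ 1 := by
            intro h
            apply hne
            field_simp at h
            linarith
          have hstrict : Real.log (P i / Q i) < P i / Q i - 1 :=
            Real.log_lt_sub_one_of_pos hratio hne1
          have hmul' : Q i * Real.log (P i / Q i) < Q i * (P i / Q i - 1) :=
            mul_lt_mul_of_pos_left hstrict hQpos
          rw [hlogd, hsimp] at hmul'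
          nlinarith [hmul']
  have hHp : H p = -∑ i ∈ Finset.range N, P i * Real.log (P i) := by
    unfold H
    congr 1
    exact sum_ext p (fun x => x * Real.log x)
  have hHq : H q = -∑ i ∈ Finset.range N, Q i * Real.log (Q i) := by
    unfold H
    congr 1
    exact sum_ext q (fun x => x * Real.log x)
  have hsum0 : ∑ i ∈ Finset.range N, (Q i - P i) = 0 := by
    rw [Finset.sum_sub_distrib, hQsum, hPsum]; ring
  have hdiff : H p - H q
      = (∑ i ∈ Finset.range N, (Q i * Real.log (Q i) - Q i * Real.log (P i) - Q i + P i))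
        + (∑ i ∈ Finset.range N, (Q i - P i) * Real.log (P i))
        + (∑ i ∈ Finset.range N, (Q i - P i)) := by
    rw [hHp, hHq, ← Finset.sum_add_distrib, ← Finset.sum_add_distrib]
    have : -∑ i ∈ Finset.range N, P i * Real.log (P i)
        - -∑ i ∈ Finset.range N, Q i * Real.log (Q i)
        = ∑ i ∈ Finset.range N, (Q i * Real.log (Q i) - P i * Real.log (P i)) := by
      rw [Finset.sum_sub_distrib]; ring
    rw [this]
    exact Finset.sum_congr rfl (fun i _ => by ring)
  rw [hsum0, add_zero] at hdiff
  have hgsum : 0 ≤ ∑ i ∈ Finset.range N,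
      (Q i * Real.log (Q i) - Q i * Real.log (P i) - Q i + P i) :=
    Finset.sum_nonneg (fun i hi => (hg i hi).1)
  constructor
  · linarith
  · intro heq
    have hzero : ∑ i ∈ Finset.range N,
        (Q i * Real.log (Q i) - Q i * Real.log (P i) - Q i + P i) = 0 := by linarith
    have hall := (Finset.sum_eq_zero_iff_of_nonneg (fun i hi => (hg i hi).1)).mp hzero
    funext i
    have hmem : (i : ℕ) ∈ Finset.range N := Finset.mem_range.mpr i.isLt
    have := (hg (i : ℕ) hmem).2 (hall (i : ℕ) hmem)
    rw [← ext_coe p i, ← ext_coe q i]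
    exact this

end DistAux

/-- d(p,q) = H(p) + H(q) − 2H(p ∨ q) is nonnegative, and vanishes iff p = q. -/
theorem dist_nonneg_eq_zero_iff {N : ℕ} (p q s : Fin N → ℝ)
    (hp : IsDecProb p) (hq : IsDecProb q) (hs : IsSup s p q) :
    0 ≤ H p + H q - 2 * H s ∧ (H p + H q - 2 * H s = 0 ↔ p = q) := by
  obtain ⟨hsd, hps, hqs, hlub⟩ := hs
  have h1 := DistAux.schur hp hsd hps
  have h2 := DistAux.schur hq hsd hqs
  constructor
  · linarith [h1.1, h2.1]
  · constructor
    · intro heq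
      have hp1 : H p = H s := by linarith [h1.1, h2.1]
      have hq1 : H q = H s := by linarith [h1.1, h2.1]
      rw [h1.2 hp1, h2.2 hq1]
    · intro heq
      subst heq
      have hsp : Maj s p := hlub p hp (DistAux.maj_refl p) (DistAux.maj_refl p)
      have : p = s := DistAux.maj_antisymm hps hsp
      rw [← this]
      ring
end

section
/- For N = 2, the fidelity preserves the majorization order: if α, β, γ ∈ δ_2 with α ≺ β ≺ γ, then F(α, β) ≥ F(α, γ), where F(p,q) = (Σ_i √(p_i q_i))². -/
open Finset

/-- Fidelity between probability vectors. -/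
noncomputable def Fid {N : ℕ} (p q : Fin N → ℝ) : ℝ := (∑ i, Real.sqrt (p i * q i)) ^ 2


lemma key_abs (x y z x' y' z' : ℝ) (nx : 0 ≤ x) (nx' : 0 ≤ x') (ny : 0 ≤ y) (nz : 0 ≤ z)
    (ny' : 0 ≤ y') (nz' : 0 ≤ z')
    (h1 : x * y' ≤ x' * y) (h2 : x * z' ≤ x' * z)
    (hyz : y ≤ z) (hzy : z' ≤ y')
    (e : (z - y) * (z + y) = (y' - z') * (y' + z')) :
    x * z + x' * z' ≤ x * y + x' * y' := by
  rcases eq_or_lt_of_le (by positivity : (0:ℝ) ≤ y' + z') with h0 | h0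
  · have hy0 : y' = 0 := by linarith
    have hz0 : z' = 0 := by linarith
    have : (z - y) * (z + y) = 0 := by rw [e, hy0, hz0]; ring
    rcases mul_eq_zero.mp this with h | h
    · have : y = z := by linarith
      rw [this, hy0, hz0]
    · -- z + y = 0, with y ≤ z and x*y' ≤ x'*y gives 0 ≤ x'*y... handle via nlinarith
      nlinarith
  · have e2 : x * (y' + z') ≤ x' * (y + z) := by linarith
    have s1 : x * (y' + z') * (z - y) ≤ x' * (y + z) * (z - y) :=
      mul_le_mul_of_nonneg_right e2 (by linarith)
    have step : x * (z - y) * (y' + z') ≤ x' * (y' - z') * (y' + z') := by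
      calc x * (z - y) * (y' + z') = x * (y' + z') * (z - y) := by ring
        _ ≤ x' * (y + z) * (z - y) := s1
        _ = x' * (y' - z') * (y' + z') := by linear_combination x' * e
    have fin : x * (z - y) ≤ x' * (y' - z') := le_of_mul_le_mul_right step h0
    nlinarith [fin]

lemma key_ineq (a b c : ℝ) (ha : 0 ≤ 1 - a) (hc : 0 ≤ 1 - c)
    (hha : 1 - a ≤ a) (hab : a ≤ b) (hbc : b ≤ c) :
    Real.sqrt (a * c) + Real.sqrt ((1 - a) * (1 - c)) ≤
    Real.sqrt (a * b) + Real.sqrt ((1 - a) * (1 - b)) := by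
  have ha0 : (0:ℝ) ≤ a := by linarith
  have hb0 : (0:ℝ) ≤ b := by linarith
  have hc0 : (0:ℝ) ≤ c := by linarith
  have hb1 : 0 ≤ 1 - b := by linarith
  rw [Real.sqrt_mul ha0, Real.sqrt_mul ha0, Real.sqrt_mul ha, Real.sqrt_mul ha]
  refine key_abs _ _ _ _ _ _ (Real.sqrt_nonneg _) (Real.sqrt_nonneg _)
    (Real.sqrt_nonneg _) (Real.sqrt_nonneg _) (Real.sqrt_nonneg _) (Real.sqrt_nonneg _) ?_ ?_
    (Real.sqrt_le_sqrt hbc) (Real.sqrt_le_sqrt (by linarith)) ?_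
  · rw [← Real.sqrt_mul ha0, ← Real.sqrt_mul ha]
    exact Real.sqrt_le_sqrt (by nlinarith)
  · rw [← Real.sqrt_mul ha0, ← Real.sqrt_mul ha]
    exact Real.sqrt_le_sqrt (by nlinarith)
  · have qb : Real.sqrt b ^ 2 = b := Real.sq_sqrt hb0
    have qc : Real.sqrt c ^ 2 = c := Real.sq_sqrt hc0
    have qb' : Real.sqrt (1 - b) ^ 2 = 1 - b := Real.sq_sqrt hb1
    have qc' : Real.sqrt (1 - c) ^ 2 = 1 - c := Real.sq_sqrt hc
    linear_combination qc - qb + qc' - qb'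

/-- For N = 2 the fidelity preserves the majorization order. -/
theorem fid_preserves_maj_delta2 (α β γ : Fin 2 → ℝ)
    (hα : IsDecProb α) (hβ : IsDecProb β) (hγ : IsDecProb γ)
    (hαβ : Maj α β) (hβγ : Maj β γ) : Fid α γ ≤ Fid α β := by
  obtain ⟨hα0, hα1, hα2⟩ := hα
  obtain ⟨hβ0, hβ1, hβ2⟩ := hβ
  obtain ⟨hγ0, hγ1, hγ2⟩ := hγ
  have hab : α 0 ≤ β 0 := by simpa [PartSum, Fin.sum_univ_two] using hαβ 1
  have hbc : β 0 ≤ γ 0 := by simpa [PartSum, Fin.sum_univ_two] using hβγ 1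
  have sα : α 0 + α 1 = 1 := by simpa [Fin.sum_univ_two] using hα2
  have sβ : β 0 + β 1 = 1 := by simpa [Fin.sum_univ_two] using hβ2
  have sγ : γ 0 + γ 1 = 1 := by simpa [Fin.sum_univ_two] using hγ2
  have eα : α 1 = 1 - α 0 := by linarith
  have eβ : β 1 = 1 - β 0 := by linarith
  have eγ : γ 1 = 1 - γ 0 := by linarith
  have key := key_ineq (α 0) (β 0) (γ 0) (by linarith [hα0 1]) (by linarith [hγ0 1])
    (by have := hα1 0 1 (by decide); linarith) hab hbc
  have nn : 0 ≤ Real.sqrt (α 0 * γ 0) + Real.sqrt (α 1 * γ 1) := by positivity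
  simp only [Fid, Fin.sum_univ_two]
  rw [eα, eβ, eγ]
  rw [eα, eγ] at nn
  exact pow_le_pow_left₀ nn key 2
end
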